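/- Let A ∈ ℝ^{m×n}, b ∈ ℝ^m. If the only λ ∈ ℝ^m satisfying λ ≥ 0, Aᵀλ ≥ 0, bᵀλ ≤ 0 is λ = 0, then the primal system Ax ≤ b, x ≥ 0 has a solution with all inequalities strict (it is solvable and full-dimensional). -/

import Mathlib

open Matrix Finset

/-- Converse: if the only dual point `λ ≥ 0`, `Aᵀλ ≥ 0`, `bᵀλ ≤ 0` is `λ = 0`, then the
primal has a strict (full-dimensional) solution. -/
theorem stmt_9 {m n : ℕ} (A : Matrix (Fin m) (Fin n) ℝ) (b : Fin m → ℝ)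
    (hdual : ∀ lam : Fin m → ℝ, 0 ≤ lam → 0 ≤ Aᵀ.mulVec lam → b ⬝ᵥ lam ≤ 0 →
      lam = 0) :
    ∃ x : Fin n → ℝ, (∀ i, A.mulVec x i < b i) ∧ (∀ j, 0 < x j) := by
  classical
  set E := (Fin n → ℝ) × ℝ
  let row : (Fin m ⊕ (Fin n ⊕ Unit)) → E :=
    Sum.elim (fun i => (A i, -b i))
      (Sum.elim (fun j => (-(Pi.single j 1), 0)) (fun _ => (0, -1)))
  by_cases h0 : (0 : E) ∈ convexHull ℝ (Set.range row)
  · -- derive a contradiction with hdual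
    exfalso
    rw [mem_convexHull_iff_exists_fintype] at h0
    obtain ⟨ι, _, w, z, hw0, hw1, hz, hx⟩ := h0
    choose g hg using fun i => (hz i : z i ∈ Set.range row)
    set W : (Fin m ⊕ (Fin n ⊕ Unit)) → ℝ := fun r => ∑ i, if g i = r then w i else 0 with hW
    have hWnn : ∀ r, 0 ≤ W r := fun r => Finset.sum_nonneg fun i _ => by
      split <;> simp [hw0 i]
    have hWsum : ∑ r, W r = 1 := by
      rw [hW]
      rw [Finset.sum_comm]
      simpa using hw1
    have hWvec : ∑ r, W r • row r = 0 := by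
      rw [hW]
      have key : ∀ r, (∑ i, if g i = r then w i else 0) • row r
          = ∑ i, if g i = r then w i • row r else 0 := by
        intro r
        rw [Finset.sum_smul]
        congr 1; funext i; split <;> simp
      simp_rw [key]
      rw [Finset.sum_comm]
      have inner : ∀ i, (∑ r, if g i = r then w i • row r else 0) = w i • row (g i) := by
        intro i
        rw [Finset.sum_ite_eq]
        simp
      simp_rw [inner]
      rw [← hx]
      congr 1; funext i; rw [hg i]
    -- extract components
    have h1 : ∀ j, (∑ i, W (Sum.inl i) * A i j)
        + ((∑ j' : Fin n, W (Sum.inr (Sum.inl j')) * (-(Pi.single j' 1) : Fin n → ℝ) j)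
          + W (Sum.inr (Sum.inr ())) * (0 : Fin n → ℝ) j) = 0 := by
      intro j
      have := congrFun (congrArg Prod.fst hWvec) j
      rw [Prod.fst_sum, Fintype.sum_sum_type, Fintype.sum_sum_type] at this
      simpa (config := { zetaDelta := true }) only [row, Sum.elim_inl, Sum.elim_inr, Prod.smul_fst, Pi.smul_apply,
        smul_eq_mul, Finset.sum_apply, Pi.add_apply, Finset.univ_unique,
        Finset.sum_singleton, Prod.fst_zero, Pi.zero_apply] using this
    have h2 : (∑ i, W (Sum.inl i) * (-b i))
        + ((∑ j' : Fin n, W (Sum.inr (Sum.inl j')) * (0:ℝ))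
          + W (Sum.inr (Sum.inr ())) * (-1)) = 0 := by
      have := congrArg Prod.snd hWvec
      rw [Prod.snd_sum, Fintype.sum_sum_type, Fintype.sum_sum_type] at this
      simpa (config := { zetaDelta := true }) only [row, Sum.elim_inl, Sum.elim_inr, Prod.smul_snd, smul_eq_mul,
        Finset.univ_unique, Finset.sum_singleton, Prod.snd_zero] using this
    set lam : Fin m → ℝ := fun i => W (Sum.inl i) with hlam
    have hAl : ∀ j, Aᵀ.mulVec lam j = W (Sum.inr (Sum.inl j)) := by
      intro j
      have hs : ∑ j' : Fin n, W (Sum.inr (Sum.inl j')) * (-(Pi.single j' 1) : Fin n → ℝ) j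
          = -W (Sum.inr (Sum.inl j)) := by
        rw [Finset.sum_eq_single j]
        · simp
        · intro j' _ hne; simp [Pi.single_apply, hne]
        · simp
      have h1j := h1 j
      rw [hs] at h1j
      simp only [Pi.zero_apply, mul_zero, add_zero] at h1j
      rw [Matrix.mulVec, dotProduct]
      simp only [transpose_apply, hlam]
      have : ∑ i, A i j * W (Sum.inl i) = ∑ i, W (Sum.inl i) * A i j :=
        Finset.sum_congr rfl fun i _ => mul_comm _ _
      rw [this]; linarith
    have hbl : b ⬝ᵥ lam = -W (Sum.inr (Sum.inr ())) := by
      rw [dotProduct]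
      have e1 : ∑ i, b i * lam i = ∑ i, W (Sum.inl i) * b i :=
        Finset.sum_congr rfl fun i _ => mul_comm _ _
      have h2' := h2
      simp only [mul_zero, Finset.sum_const_zero, zero_add, mul_neg, mul_one] at h2'
      have e2 : ∑ i, -(W (Sum.inl i) * b i) = -∑ i, W (Sum.inl i) * b i := by
        rw [Finset.sum_neg_distrib]
      rw [e1]
      linarith
    have hlam0 : lam = 0 := by
      apply hdual
      · intro i; exact hWnn _
      · intro j; rw [hAl j]; exact hWnn _
      · rw [hbl]; simpa using hWnn (Sum.inr (Sum.inr ()))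
    -- all weights vanish
    have hz1 : ∀ j, W (Sum.inr (Sum.inl j)) = 0 := by
      intro j; rw [← hAl j, hlam0]; simp
    have hz2 : W (Sum.inr (Sum.inr ())) = 0 := by
      have := hbl; rw [hlam0] at this; simpa using this.symm
    have : (1:ℝ) = 0 := by
      rw [← hWsum, Fintype.sum_sum_type, Fintype.sum_sum_type]
      have : ∀ i, W (Sum.inl i) = 0 := fun i => congrFun hlam0 i
      simp [this, hz1, hz2]
    norm_num at this
  · -- separation
    obtain ⟨f, u, hfu, hsep⟩ := geometric_hahn_banach_point_closed
      (convex_convexHull ℝ _) ((Set.finite_range row).isClosed_convexHull ℝ) h0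
    have hu : 0 < u := by simpa using hfu
    have hrow : ∀ r, 0 < f (row r) := fun r =>
      hu.trans (hsep _ (subset_convexHull ℝ _ (Set.mem_range_self r)))
    set y : Fin n → ℝ := fun j => f ((Pi.single j 1 : Fin n → ℝ), 0) with hy
    set s : ℝ := f ((0 : Fin n → ℝ), 1) with hs
    have hdecomp : ∀ (v : Fin n → ℝ) (t : ℝ),
        f (v, t) = (∑ j, v j * y j) + t * s := by
      intro v t
      have hvt : (v, t) = (∑ j, v j • ((Pi.single j 1 : Fin n → ℝ), (0:ℝ)))
          + t • ((0 : Fin n → ℝ), (1:ℝ)) := by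
        rw [Prod.ext_iff]
        constructor
        · simp only [Prod.fst_sum, Prod.smul_fst, Prod.fst_add, Prod.smul_fst]
          funext j'
          simp [Finset.sum_apply, Pi.single_apply, Finset.sum_ite_eq']
        · simp [Prod.snd_sum]
      rw [hvt, map_add, map_sum, _root_.map_smul, smul_eq_mul]
      congr 1
      refine Finset.sum_congr rfl fun x _ => ?_
      rw [_root_.map_smul, smul_eq_mul]
    have hsneg : s < 0 := by
      have := hrow (Sum.inr (Sum.inr ()))
      rw [show row (Sum.inr (Sum.inr ())) = ((0 : Fin n → ℝ), (-1:ℝ)) from rfl,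
        hdecomp] at this
      simp at this
      linarith
    have hyneg : ∀ j, y j < 0 := by
      intro j
      have := hrow (Sum.inr (Sum.inl j))
      rw [show row (Sum.inr (Sum.inl j)) = ((-(Pi.single j 1) : Fin n → ℝ), (0:ℝ)) from rfl,
        hdecomp] at this
      have hsum : ∑ j', (-(Pi.single j 1) : Fin n → ℝ) j' * y j' = -y j := by
        rw [Finset.sum_eq_single j]
        · simp
        · intro j' _ hne; simp [Pi.single_apply, Ne.symm hne]
        · simp
      rw [hsum] at this
      simp at this
      linarith
    have hAi : ∀ i, b i * s < ∑ j, A i j * y j := by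
      intro i
      have := hrow (Sum.inl i)
      rw [show row (Sum.inl i) = ((A i : Fin n → ℝ), -b i) from rfl, hdecomp] at this
      linarith
    refine ⟨fun j => y j / s, fun i => ?_, fun j => div_pos_of_neg_of_neg (hyneg j) hsneg⟩
    rw [Matrix.mulVec, dotProduct]
    have : ∑ j, A i j * (y j / s) = (∑ j, A i j * y j) / s := by
      rw [Finset.sum_div]
      exact Finset.sum_congr rfl fun j _ => by ring
    rw [this, div_lt_iff_of_neg hsneg]
    exact hAi i
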